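/- Let λ₂ = max_{0≤r≤R_s}(g*(r) + a(r)). If φ ∈ C¹([0,R_s]×[0,∞);ℝ) satisfies ∂_t φ(r,t) = −v_s(r)∂_r φ(r,t) + a(r)φ(r,t) for (r,t) ∈ (0,R_s)×(0,∞), then ∫₀^{R_s}|φ(r,t)| r^{n−1} dr ≤ e^{λ₂ t} ∫₀^{R_s}|φ(r,0)| r^{n−1} dr for all t ≥ 0. (Lemma 4.3.) -/

import Mathlib

open Set Real intervalIntegral

section Aux

open MeasureTheory

private lemma sqrt_sq_add_sq_pos {x e : ℝ} (he : 0 < e) : 0 < Real.sqrt (x^2 + e^2) :=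
  Real.sqrt_pos.2 (by positivity)

private lemma abs_le_sqrt_sq_add_sq (x e : ℝ) : |x| ≤ Real.sqrt (x^2 + e^2) := by
  rw [← Real.sqrt_sq_eq_abs]
  exact Real.sqrt_le_sqrt (by nlinarith [sq_nonneg e])

private lemma sqrt_sq_add_sq_le (x : ℝ) {e : ℝ} (he : 0 ≤ e) :
    Real.sqrt (x^2 + e^2) ≤ |x| + e := by
  have h : Real.sqrt (x^2+e^2) ≤ Real.sqrt ((|x|+e)^2) :=
    Real.sqrt_le_sqrt (by nlinarith [abs_nonneg x, sq_abs x])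
  rwa [Real.sqrt_sq (by positivity)] at h

private lemma hasDerivAt_sqrt_comp {h : ℝ → ℝ} {d x e : ℝ} (he : 0 < e)
    (hh : HasDerivAt h d x) :
    HasDerivAt (fun y => Real.sqrt (h y ^ 2 + e ^ 2))
      (h x * d / Real.sqrt (h x ^ 2 + e ^ 2)) x := by
  have hg : HasDerivAt (fun y => h y ^ 2 + e ^ 2) (2 * h x * d) x := by
    simpa [pow_one, mul_comm, mul_assoc] using (hh.pow 2).add_const (e^2)
  have hne : h x ^ 2 + e ^ 2 ≠ 0 := by positivity
  have hs := (Real.hasDerivAt_sqrt hne).comp x hg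
  have hsp : 0 < Real.sqrt (h x ^2 + e^2) := sqrt_sq_add_sq_pos he
  refine hs.congr_deriv ?_
  ring

private lemma gronwallBound_mono_delta {δ δ' K ε x : ℝ} (h : δ ≤ δ') :
    gronwallBound δ K ε x ≤ gronwallBound δ' K ε x := by
  unfold gronwallBound
  split_ifs with hK
  · linarith
  · have := Real.exp_pos (K * x)
    nlinarith

private lemma continuous_gronwallBound_delta_x (K ε : ℝ) :
    Continuous (fun p : ℝ × ℝ => gronwallBound p.1 K ε p.2) := by
  unfold gronwallBound
  split_ifs with hK
  · fun_prop
  · fun_prop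

private lemma continuous_gronwallBound_delta_eps (K x : ℝ) :
    Continuous (fun p : ℝ × ℝ => gronwallBound p.1 K p.2 x) := by
  unfold gronwallBound
  split_ifs with hK
  · fun_prop
  · fun_prop

private lemma sect_r {Rs : ℝ} {g : ℝ → ℝ → ℝ}
    (hg : ContinuousOn (fun p : ℝ × ℝ => g p.1 p.2) (Icc 0 Rs ×ˢ Ici 0))
    {t : ℝ} (ht : 0 ≤ t) : ContinuousOn (fun r => g r t) (Icc 0 Rs) :=
  hg.comp ((continuous_id.prodMk continuous_const).continuousOn)
    (fun _ hr => Set.mk_mem_prod hr ht)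

private lemma sect_t {Rs : ℝ} {g : ℝ → ℝ → ℝ}
    (hg : ContinuousOn (fun p : ℝ × ℝ => g p.1 p.2) (Icc 0 Rs ×ˢ Ici 0))
    {r : ℝ} (hr : r ∈ Icc (0:ℝ) Rs) : ContinuousOn (fun t => g r t) (Ici 0) :=
  hg.comp ((continuous_const.prodMk continuous_id).continuousOn)
    (fun _ ht => Set.mk_mem_prod hr ht)

private lemma ae_ne_const (c : ℝ) : ∀ᵐ (r : ℝ), r ≠ c := by
  refine (MeasureTheory.ae_iff).2 ?_
  simpa using measure_singleton c

private lemma bound_on_compact {Rs : ℝ} {g : ℝ → ℝ → ℝ}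
    (hg : ContinuousOn (fun p : ℝ × ℝ => g p.1 p.2) (Icc 0 Rs ×ˢ Ici 0)) (b : ℝ) :
    ∃ M : ℝ, ∀ r ∈ Icc (0:ℝ) Rs, ∀ t ∈ Icc (0:ℝ) b, |g r t| ≤ M := by
  obtain ⟨M, hM⟩ := (isCompact_Icc.prod isCompact_Icc).exists_bound_of_continuousOn
    (hg.mono (prod_mono_right Icc_subset_Ici_self))
  exact ⟨M, fun r hr t htt => by simpa using hM (r, t) (Set.mk_mem_prod hr htt)⟩

private lemma deriv_Feps
    (n : ℕ) (Rs : ℝ) (hRs : 0 < Rs)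
    (φ φt : ℝ → ℝ → ℝ)
    (hφcont : ContinuousOn (fun p : ℝ × ℝ => φ p.1 p.2) (Icc 0 Rs ×ˢ Ici 0))
    (hφtcont : ContinuousOn (fun p : ℝ × ℝ => φt p.1 p.2) (Icc 0 Rs ×ˢ Ici 0))
    (hφt : ∀ r ∈ Ioo (0:ℝ) Rs, ∀ t ∈ Ioi (0:ℝ),
      HasDerivAt (fun τ => φ r τ) (φt r t) t)
    (ε : ℝ) (hε : 0 < ε) (t : ℝ) (ht : 0 < t) :
    HasDerivAt (fun τ => ∫ r in (0:ℝ)..Rs, Real.sqrt (φ r τ ^ 2 + ε ^ 2) * r ^ (n-1))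
      (∫ r in (0:ℝ)..Rs, (φ r t * φt r t / Real.sqrt (φ r t ^ 2 + ε ^ 2)) * r ^ (n-1)) t := by
  have hI : Set.uIoc (0:ℝ) Rs = Ioc 0 Rs := uIoc_of_le hRs.le
  have hball : Metric.ball t (t/2) ⊆ Ioi (0:ℝ) := by
    intro x hx
    rw [Metric.mem_ball, Real.dist_eq] at hx
    have := abs_lt.1 hx
    simp only [mem_Ioi]; linarith [this.1]
  have hballIcc : Metric.ball t (t/2) ⊆ Icc (0:ℝ) (2*t) := by
    intro x hx
    rw [Metric.mem_ball, Real.dist_eq] at hx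
    have := abs_lt.1 hx
    constructor <;> [linarith [this.1]; linarith [this.2]]
  obtain ⟨M, hM⟩ := bound_on_compact hφtcont (2*t)
  have hmeas : ∀ x ∈ Metric.ball t (t/2), AEStronglyMeasurable
      (fun r => Real.sqrt (φ r x ^ 2 + ε ^ 2) * r ^ (n-1))
      (volume.restrict (Set.uIoc (0:ℝ) Rs)) := by
    intro x hx
    rw [hI]
    have hx0 : (0:ℝ) ≤ x := (hball hx).le
    have hc : ContinuousOn (fun r => Real.sqrt (φ r x ^ 2 + ε ^ 2) * r ^ (n-1)) (Icc 0 Rs) := by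
      have := sect_r hφcont hx0
      fun_prop
    exact (hc.mono Ioc_subset_Icc_self).aestronglyMeasurable measurableSet_Ioc
  have key := intervalIntegral.hasDerivAt_integral_of_dominated_loc_of_deriv_le
    (F := fun x r => Real.sqrt (φ r x ^ 2 + ε ^ 2) * r ^ (n-1))
    (F' := fun x r => (φ r x * φt r x / Real.sqrt (φ r x ^ 2 + ε ^ 2)) * r ^ (n-1))
    (x₀ := t) (a := 0) (b := Rs) (μ := volume)
    (bound := fun _ => M * Rs ^ (n-1))
    (Metric.ball_mem_nhds t (half_pos ht))
    (Filter.eventually_of_mem (Metric.ball_mem_nhds t (half_pos ht)) hmeas)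
    ?_ ?_ ?_ ?_ ?_
  · exact key.2
  · have hc : ContinuousOn (fun r => Real.sqrt (φ r t ^ 2 + ε ^ 2) * r ^ (n-1)) (Icc 0 Rs) := by
      have := sect_r hφcont ht.le
      fun_prop
    exact (hc.mono (by rw [uIcc_of_le hRs.le])).intervalIntegrable
  · rw [hI]
    have hc : ContinuousOn
        (fun r => (φ r t * φt r t / Real.sqrt (φ r t ^ 2 + ε ^ 2)) * r ^ (n-1)) (Icc 0 Rs) := by
      have h1 := sect_r hφcont ht.le
      have h2 := sect_r hφtcont ht.le
      have h3 : ∀ r ∈ Icc (0:ℝ) Rs, Real.sqrt (φ r t ^ 2 + ε ^ 2) ≠ 0 :=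
        fun r _ => (sqrt_sq_add_sq_pos hε).ne'
      fun_prop (disch := assumption)
    exact (hc.mono Ioc_subset_Icc_self).aestronglyMeasurable measurableSet_Ioc
  · filter_upwards with r hr x hx
    rw [hI] at hr
    have hx0 := hballIcc hx
    have h1 : |φ r x * φt r x / Real.sqrt (φ r x ^ 2 + ε ^ 2)| ≤ |φt r x| := by
      rw [abs_div, mul_comm, abs_mul]
      rw [div_le_iff₀ (abs_pos.2 (sqrt_sq_add_sq_pos hε).ne')]
      have := abs_le_sqrt_sq_add_sq (φ r x) ε
      have h2 : |Real.sqrt (φ r x ^ 2 + ε ^ 2)| = Real.sqrt (φ r x ^ 2 + ε ^ 2) :=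
        abs_of_pos (sqrt_sq_add_sq_pos hε)
      rw [h2]
      exact mul_le_mul_of_nonneg_left this (abs_nonneg _)
    have h2 : |φt r x| ≤ M := hM r (Ioc_subset_Icc_self hr) x hx0
    have h3 : |r ^ (n-1)| ≤ Rs ^ (n-1) := by
      rw [abs_pow, abs_of_nonneg hr.1.le]
      exact pow_le_pow_left₀ hr.1.le hr.2 _
    calc ‖(φ r x * φt r x / Real.sqrt (φ r x ^ 2 + ε ^ 2)) * r ^ (n-1)‖
        = |φ r x * φt r x / Real.sqrt (φ r x ^ 2 + ε ^ 2)| * |r ^ (n-1)| := by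
          rw [Real.norm_eq_abs, abs_mul]
      _ ≤ M * Rs ^ (n-1) := by
          apply mul_le_mul (h1.trans h2) h3 (abs_nonneg _)
          exact (abs_nonneg _).trans (h1.trans h2)
  · exact intervalIntegrable_const
  · filter_upwards [ae_ne_const Rs] with r hrne hr x hx
    rw [hI] at hr
    have hrIoo : r ∈ Ioo (0:ℝ) Rs := ⟨hr.1, lt_of_le_of_ne hr.2 hrne⟩
    exact (hasDerivAt_sqrt_comp hε (hφt r hrIoo x (hball hx))).mul_const _

set_option maxHeartbeats 1000000 in
private lemma bound_Deps
    (n : ℕ) (hn : 2 ≤ n) (Rs : ℝ) (hRs : 0 < Rs)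
    (vs vs' : ℝ → ℝ)
    (hvs : ∀ r ∈ Icc (0:ℝ) Rs, HasDerivAt vs (vs' r) r)
    (hvs'cont : ContinuousOn vs' (Icc 0 Rs))
    (hvs0 : vs 0 = 0) (hvsRs : vs Rs = 0)
    (gstar : ℝ → ℝ)
    (hgstar : ∀ r ∈ Ioc (0:ℝ) Rs, gstar r = vs' r + ((n - 1 : ℝ) / r) * vs r)
    (a : ℝ → ℝ) (hacont : ContinuousOn a (Icc 0 Rs))
    (lam₂ : ℝ) (hlam₂ : IsGreatest ((fun r => gstar r + a r) '' Icc (0:ℝ) Rs) lam₂)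
    (φ φr φt : ℝ → ℝ → ℝ)
    (hφcont : ContinuousOn (fun p : ℝ × ℝ => φ p.1 p.2) (Icc 0 Rs ×ˢ Ici 0))
    (hφrcont : ContinuousOn (fun p : ℝ × ℝ => φr p.1 p.2) (Icc 0 Rs ×ˢ Ici 0))
    (hφtcont : ContinuousOn (fun p : ℝ × ℝ => φt p.1 p.2) (Icc 0 Rs ×ˢ Ici 0))
    (hφr : ∀ r ∈ Ioo (0:ℝ) Rs, ∀ t ∈ Ioi (0:ℝ),
      HasDerivAt (fun s => φ s t) (φr r t) r)
    (heq : ∀ r ∈ Ioo (0:ℝ) Rs, ∀ t ∈ Ioi (0:ℝ),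
      φt r t = -vs r * φr r t + a r * φ r t)
    (ε : ℝ) (hε : 0 < ε) (t : ℝ) (ht : 0 < t) :
    (∫ r in (0:ℝ)..Rs, (φ r t * φt r t / Real.sqrt (φ r t ^ 2 + ε ^ 2)) * r ^ (n-1))
      ≤ lam₂ * (∫ r in (0:ℝ)..Rs, Real.sqrt (φ r t ^ 2 + ε ^ 2) * r ^ (n-1))
        + ε * (∫ r in (0:ℝ)..Rs, |a r| * r ^ (n-1)) := by
  have hvscont : ContinuousOn vs (Icc 0 Rs) :=
    fun r hr => ((hvs r hr).continuousAt).continuousWithinAt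
  have hφc := sect_r hφcont ht.le
  have hφrc := sect_r hφrcont ht.le
  have hφtc := sect_r hφtcont ht.le
  have hψne : ∀ r : ℝ, Real.sqrt (φ r t ^ 2 + ε ^ 2) ≠ 0 :=
    fun r => (sqrt_sq_add_sq_pos hε).ne'
  have hψc : ContinuousOn (fun r => Real.sqrt (φ r t ^ 2 + ε ^ 2)) (Icc 0 Rs) := by fun_prop
  have intgr : ∀ f : ℝ → ℝ, ContinuousOn f (Icc 0 Rs) → IntervalIntegrable f volume 0 Rs :=
    fun f hf => (hf.mono (by rw [uIcc_of_le hRs.le])).intervalIntegrable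
  have hFTC : (∫ r in (0:ℝ)..Rs,
        ((vs' r * r ^ (n-1) + vs r * (↑(n-1) * r ^ (n-1-1))) * Real.sqrt (φ r t ^ 2 + ε ^ 2)
          + (vs r * r ^ (n-1)) * (φ r t * φr r t / Real.sqrt (φ r t ^ 2 + ε ^ 2)))) = 0 := by
    have := intervalIntegral.integral_eq_sub_of_hasDerivAt_of_le hRs.le
      (f := fun r => (vs r * r ^ (n-1)) * Real.sqrt (φ r t ^ 2 + ε ^ 2))
      (f' := fun r => (vs' r * r ^ (n-1) + vs r * (↑(n-1) * r ^ (n-1-1))) *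
          Real.sqrt (φ r t ^ 2 + ε ^ 2)
          + (vs r * r ^ (n-1)) * (φ r t * φr r t / Real.sqrt (φ r t ^ 2 + ε ^ 2)))
      (by fun_prop)
      (fun r hr => by
        have hu : HasDerivAt (fun r => vs r * r ^ (n-1))
            (vs' r * r ^ (n-1) + vs r * (↑(n-1) * r ^ (n-1-1))) r :=
          (hvs r (Ioo_subset_Icc_self hr)).mul (hasDerivAt_pow (n-1) r)
        exact hu.mul (hasDerivAt_sqrt_comp hε (hφr r hr t ht)))
      (intgr _ (by
      have h3 : ∀ r ∈ Icc (0:ℝ) Rs, Real.sqrt (φ r t ^ 2 + ε ^ 2) ≠ 0 := fun r _ => hψne r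
      fun_prop (disch := assumption)))
    rw [this]
    simp [hvs0, hvsRs]
  have hcongr : (∫ r in (0:ℝ)..Rs, (φ r t * φt r t / Real.sqrt (φ r t ^ 2 + ε ^ 2)) * r ^ (n-1))
      = ∫ r in (0:ℝ)..Rs,
        (-((vs r * r ^ (n-1)) * (φ r t * φr r t / Real.sqrt (φ r t ^ 2 + ε ^ 2)))
          + a r * (φ r t ^ 2 / Real.sqrt (φ r t ^ 2 + ε ^ 2)) * r ^ (n-1)) := by
    apply intervalIntegral.integral_congr_ae
    filter_upwards [ae_ne_const Rs] with r hrne hr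
    rw [uIoc_of_le hRs.le] at hr
    have hrIoo : r ∈ Ioo (0:ℝ) Rs := ⟨hr.1, lt_of_le_of_ne hr.2 hrne⟩
    rw [heq r hrIoo t ht]
    have hss : Real.sqrt (φ r t ^ 2 + ε ^ 2) * Real.sqrt (φ r t ^ 2 + ε ^ 2)
        = φ r t ^ 2 + ε ^ 2 := Real.mul_self_sqrt (by positivity)
    have hsq : Real.sqrt (φ r t ^ 2 + ε ^ 2) ^ 2 = φ r t ^ 2 + ε ^ 2 :=
      Real.sq_sqrt (by positivity)
    field_simp
  rw [hcongr]
  have i1 : IntervalIntegrable (fun r =>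
      (vs r * r ^ (n-1)) * (φ r t * φr r t / Real.sqrt (φ r t ^ 2 + ε ^ 2))) volume 0 Rs :=
    intgr _ (by
      have h3 : ∀ r ∈ Icc (0:ℝ) Rs, Real.sqrt (φ r t ^ 2 + ε ^ 2) ≠ 0 := fun r _ => hψne r
      fun_prop (disch := assumption))
  have i2 : IntervalIntegrable (fun r =>
      a r * (φ r t ^ 2 / Real.sqrt (φ r t ^ 2 + ε ^ 2)) * r ^ (n-1)) volume 0 Rs :=
    intgr _ (by
      have h3 : ∀ r ∈ Icc (0:ℝ) Rs, Real.sqrt (φ r t ^ 2 + ε ^ 2) ≠ 0 := fun r _ => hψne r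
      fun_prop (disch := assumption))
  have i3 : IntervalIntegrable (fun r =>
      (vs' r * r ^ (n-1) + vs r * (↑(n-1) * r ^ (n-1-1))) * Real.sqrt (φ r t ^ 2 + ε ^ 2))
      volume 0 Rs :=
    intgr _ (by fun_prop)
  have i1n : IntervalIntegrable (fun r =>
      -((vs r * r ^ (n-1)) * (φ r t * φr r t / Real.sqrt (φ r t ^ 2 + ε ^ 2)))) volume 0 Rs :=
    intgr _ (by
      have h3 : ∀ r ∈ Icc (0:ℝ) Rs, Real.sqrt (φ r t ^ 2 + ε ^ 2) ≠ 0 := fun r _ => hψne r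
      fun_prop (disch := assumption))
  rw [intervalIntegral.integral_add i1n i2]
  have hIBP : (∫ r in (0:ℝ)..Rs,
      -((vs r * r ^ (n-1)) * (φ r t * φr r t / Real.sqrt (φ r t ^ 2 + ε ^ 2))))
      = ∫ r in (0:ℝ)..Rs,
        (vs' r * r ^ (n-1) + vs r * (↑(n-1) * r ^ (n-1-1))) * Real.sqrt (φ r t ^ 2 + ε ^ 2) := by
    rw [intervalIntegral.integral_neg]
    have := intervalIntegral.integral_add i3 i1
    rw [hFTC] at this
    linarith
  rw [hIBP, ← intervalIntegral.integral_add i3 i2]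
  have hmono : (∫ r in (0:ℝ)..Rs,
      ((vs' r * r ^ (n-1) + vs r * (↑(n-1) * r ^ (n-1-1))) * Real.sqrt (φ r t ^ 2 + ε ^ 2)
        + a r * (φ r t ^ 2 / Real.sqrt (φ r t ^ 2 + ε ^ 2)) * r ^ (n-1)))
      ≤ ∫ r in (0:ℝ)..Rs,
        (lam₂ * (Real.sqrt (φ r t ^ 2 + ε ^ 2) * r ^ (n-1)) + ε * (|a r| * r ^ (n-1))) := by
    apply intervalIntegral.integral_mono_on hRs.le (i3.add i2)
    · exact ((intgr _ (by fun_prop)).const_mul lam₂).add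
        ((intgr _ (by fun_prop)).const_mul ε)
    · intro r hr
      rcases eq_or_lt_of_le hr.1 with h0 | h0
      · subst h0
        have : (0:ℝ) ^ (n-1) = 0 := zero_pow (by omega)
        simp [this, hvs0]
      · have hψpos : 0 < Real.sqrt (φ r t ^ 2 + ε ^ 2) := sqrt_sq_add_sq_pos hε
        have hrpos : 0 < r := h0
        have hcast : (↑(n-1) : ℝ) = (n:ℝ) - 1 := by
          have : 1 ≤ n := by omega
          push_cast [Nat.cast_sub this]
          ring
        have hupr : vs' r * r ^ (n-1) + vs r * (↑(n-1) * r ^ (n-1-1))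
            = gstar r * r ^ (n-1) := by
          rw [hgstar r ⟨hrpos, hr.2⟩, hcast]
          have hpow : r ^ (n-1) = r * r ^ (n-1-1) := by
            rw [← pow_succ']
            congr 1
            omega
          rw [hpow]
          field_simp
        rw [hupr]
        have hεψ : ε ^ 2 / Real.sqrt (φ r t ^ 2 + ε ^ 2) ≤ ε := by
          rw [div_le_iff₀ hψpos]
          have : ε = Real.sqrt (ε ^ 2) := (Real.sqrt_sq hε.le).symm
          calc ε ^ 2 = ε * Real.sqrt (ε ^ 2) := by rw [← this]; ring
            _ ≤ ε * Real.sqrt (φ r t ^ 2 + ε ^ 2) := by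
                apply mul_le_mul_of_nonneg_left _ hε.le
                exact Real.sqrt_le_sqrt (by nlinarith [sq_nonneg (φ r t)])
        have hφsq : φ r t ^ 2 / Real.sqrt (φ r t ^ 2 + ε ^ 2)
            = Real.sqrt (φ r t ^ 2 + ε ^ 2) - ε ^ 2 / Real.sqrt (φ r t ^ 2 + ε ^ 2) := by
          rw [eq_sub_iff_add_eq, ← add_div, ← Real.sq_sqrt (by positivity :
            (0:ℝ) ≤ φ r t ^ 2 + ε ^ 2)]
          field_simp
          rw [Real.sqrt_sq (Real.sqrt_nonneg _)]
        have hrm : (0:ℝ) ≤ r ^ (n-1) := by positivity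
        have hlam : gstar r + a r ≤ lam₂ := hlam₂.2 ⟨r, Ioc_subset_Icc_self ⟨hrpos, hr.2⟩, rfl⟩
        have haε : a r * (φ r t ^ 2 / Real.sqrt (φ r t ^ 2 + ε ^ 2))
            ≤ a r * Real.sqrt (φ r t ^ 2 + ε ^ 2) + |a r| * ε := by
          rw [hφsq, mul_sub]
          have h1 : - (a r * (ε ^ 2 / Real.sqrt (φ r t ^ 2 + ε ^ 2))) ≤ |a r| * ε := by
            have h2 : |a r * (ε ^ 2 / Real.sqrt (φ r t ^ 2 + ε ^ 2))| ≤ |a r| * ε := by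
              rw [abs_mul]
              apply mul_le_mul_of_nonneg_left _ (abs_nonneg _)
              rw [abs_of_nonneg (by positivity)]
              exact hεψ
            linarith [neg_abs_le (a r * (ε ^ 2 / Real.sqrt (φ r t ^ 2 + ε ^ 2)))]
          linarith
        calc gstar r * r ^ (n-1) * Real.sqrt (φ r t ^ 2 + ε ^ 2)
              + a r * (φ r t ^ 2 / Real.sqrt (φ r t ^ 2 + ε ^ 2)) * r ^ (n-1)
            ≤ gstar r * r ^ (n-1) * Real.sqrt (φ r t ^ 2 + ε ^ 2)
              + (a r * Real.sqrt (φ r t ^ 2 + ε ^ 2) + |a r| * ε) * r ^ (n-1) := by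
              have := mul_le_mul_of_nonneg_right haε hrm
              linarith
          _ = (gstar r + a r) * (Real.sqrt (φ r t ^ 2 + ε ^ 2) * r ^ (n-1))
              + ε * (|a r| * r ^ (n-1)) := by ring
          _ ≤ lam₂ * (Real.sqrt (φ r t ^ 2 + ε ^ 2) * r ^ (n-1)) + ε * (|a r| * r ^ (n-1)) := by
              have : (0:ℝ) ≤ Real.sqrt (φ r t ^ 2 + ε ^ 2) * r ^ (n-1) :=
                mul_nonneg hψpos.le hrm
              nlinarith
  refine le_trans hmono (le_of_eq ?_)
  rw [intervalIntegral.integral_add ((intgr _ (by fun_prop)).const_mul lam₂)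
    ((intgr _ (by fun_prop)).const_mul ε),
    intervalIntegral.integral_const_mul, intervalIntegral.integral_const_mul]

private lemma cont_Feps
    (n : ℕ) (Rs : ℝ) (hRs : 0 < Rs)
    (φ : ℝ → ℝ → ℝ)
    (hφcont : ContinuousOn (fun p : ℝ × ℝ => φ p.1 p.2) (Icc 0 Rs ×ˢ Ici 0))
    (ε : ℝ) (hε : 0 < ε) (t₀ : ℝ) (ht₀ : 0 ≤ t₀) :
    ContinuousWithinAt
      (fun τ => ∫ r in (0:ℝ)..Rs, Real.sqrt (φ r τ ^ 2 + ε ^ 2) * r ^ (n-1)) (Ici 0) t₀ := by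
  obtain ⟨M, hM⟩ := bound_on_compact hφcont (t₀ + 1)
  have hI : Set.uIoc (0:ℝ) Rs = Ioc 0 Rs := uIoc_of_le hRs.le
  apply intervalIntegral.continuousWithinAt_of_dominated_interval
    (bound := fun _ => (|M| + ε) * Rs ^ (n-1))
  · filter_upwards [self_mem_nhdsWithin] with x hx
    rw [hI]
    have hc : ContinuousOn (fun r => Real.sqrt (φ r x ^ 2 + ε ^ 2) * r ^ (n-1)) (Icc 0 Rs) := by
      have : ContinuousOn (fun r => φ r x) (Icc 0 Rs) :=
        hφcont.comp ((continuous_id.prodMk continuous_const).continuousOn)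
          (fun r hr => Set.mk_mem_prod hr hx)
      fun_prop
    exact (hc.mono Ioc_subset_Icc_self).aestronglyMeasurable measurableSet_Ioc
  · have hmem : Ioo (-1) (t₀ + 1) ∩ Ici 0 ∈ nhdsWithin t₀ (Ici 0) := by
      exact Filter.inter_mem
        (mem_nhdsWithin_of_mem_nhds (Ioo_mem_nhds (by linarith) (by linarith)))
        self_mem_nhdsWithin
    filter_upwards [hmem] with x hx
    filter_upwards with r hr
    rw [hI] at hr
    have h1 : Real.sqrt (φ r x ^ 2 + ε ^ 2) ≤ |M| + ε := by
      refine (sqrt_sq_add_sq_le _ hε.le).trans ?_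
      have := hM r (Ioc_subset_Icc_self hr) x ⟨hx.2, hx.1.2.le⟩
      have := le_abs_self M
      linarith
    have h2 : |r ^ (n-1)| ≤ Rs ^ (n-1) := by
      rw [abs_pow, abs_of_nonneg hr.1.le]
      exact pow_le_pow_left₀ hr.1.le hr.2 _
    rw [Real.norm_eq_abs, abs_mul, abs_of_nonneg (Real.sqrt_nonneg _)]
    apply mul_le_mul h1 h2 (abs_nonneg _)
    positivity
  · exact intervalIntegrable_const
  · filter_upwards with r hr
    rw [hI] at hr
    have hc : ContinuousOn (fun τ => Real.sqrt (φ r τ ^ 2 + ε ^ 2) * r ^ (n-1)) (Ici 0) := by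
      have := sect_t hφcont (Ioc_subset_Icc_self hr)
      fun_prop
    exact hc.continuousWithinAt ht₀

private lemma freq_slope {f : ℝ → ℝ} {f' x r : ℝ} (hf : HasDerivAt f f' x) (hr : f' < r) :
    ∃ᶠ z in nhdsWithin x (Ioi x), (z - x)⁻¹ * (f z - f x) < r := by
  have ht : Filter.Tendsto (slope f x) (nhdsWithin x (Ioi x)) (nhds f') :=
    (hasDerivAt_iff_tendsto_slope.1 hf).mono_left
      (nhdsWithin_mono x (fun z hz => ne_of_gt hz))
  have hev : ∀ᶠ z in nhdsWithin x (Ioi x), slope f x z < r :=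
    ht.eventually_lt_const hr
  refine hev.frequently.mono ?_
  intro z hz
  simpa [slope_def_field, div_eq_inv_mul] using hz

end Aux

/-- Lemma 4.3: `L¹`-decay for the transport semigroup. If
`∂_t φ = −v_s ∂_r φ + a φ` on `(0,R_s)×(0,∞)` with `φ ∈ C¹([0,R_s]×[0,∞))`, then
`∫₀^{R_s} |φ(r,t)| r^{n−1} dr ≤ e^{λ₂ t} ∫₀^{R_s} |φ(r,0)| r^{n−1} dr` where
`λ₂ = max_{[0,R_s]} (g* + a)`. -/
theorem stmt_9
    (n : ℕ) (hn : 2 ≤ n) (Rs : ℝ) (hRs : 0 < Rs)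
    (vs vs' : ℝ → ℝ)
    (hvs : ∀ r ∈ Icc (0:ℝ) Rs, HasDerivAt vs (vs' r) r)
    (hvs'cont : ContinuousOn vs' (Icc 0 Rs))
    (hvs0 : vs 0 = 0) (hvsRs : vs Rs = 0)
    (gstar : ℝ → ℝ)
    (hgstar : ∀ r ∈ Ioc (0:ℝ) Rs, gstar r = vs' r + ((n - 1 : ℝ) / r) * vs r)
    (hgstar0 : gstar 0 = n * vs' 0)
    (a : ℝ → ℝ) (hacont : ContinuousOn a (Icc 0 Rs))
    (lam₂ : ℝ) (hlam₂ : IsGreatest ((fun r => gstar r + a r) '' Icc (0:ℝ) Rs) lam₂)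
    (φ φr φt : ℝ → ℝ → ℝ)
    (hφcont : ContinuousOn (fun p : ℝ × ℝ => φ p.1 p.2) (Icc 0 Rs ×ˢ Ici 0))
    (hφrcont : ContinuousOn (fun p : ℝ × ℝ => φr p.1 p.2) (Icc 0 Rs ×ˢ Ici 0))
    (hφtcont : ContinuousOn (fun p : ℝ × ℝ => φt p.1 p.2) (Icc 0 Rs ×ˢ Ici 0))
    (hφr : ∀ r ∈ Ioo (0:ℝ) Rs, ∀ t ∈ Ioi (0:ℝ),
      HasDerivAt (fun s => φ s t) (φr r t) r)
    (hφt : ∀ r ∈ Ioo (0:ℝ) Rs, ∀ t ∈ Ioi (0:ℝ),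
      HasDerivAt (fun τ => φ r τ) (φt r t) t)
    (heq : ∀ r ∈ Ioo (0:ℝ) Rs, ∀ t ∈ Ioi (0:ℝ),
      φt r t = -vs r * φr r t + a r * φ r t) :
    ∀ t : ℝ, 0 ≤ t →
      (∫ r in (0:ℝ)..Rs, |φ r t| * r ^ (n - 1)) ≤
        Real.exp (lam₂ * t) * ∫ r in (0:ℝ)..Rs, |φ r 0| * r ^ (n - 1) := by
  intro T hT
  rcases eq_or_lt_of_le hT with h0 | h0
  · rw [← h0]
    simp
  have intgr : ∀ f : ℝ → ℝ, ContinuousOn f (Icc 0 Rs) →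
      IntervalIntegrable f MeasureTheory.volume 0 Rs :=
    fun f hf => (hf.mono (by rw [uIcc_of_le hRs.le])).intervalIntegrable
  have hφ0 := sect_r hφcont (le_refl (0:ℝ))
  have hφT := sect_r hφcont hT
  -- `key_eps` : the Grönwall step for each ε > 0
  have key_eps : ∀ ε : ℝ, 0 < ε →
      (∫ r in (0:ℝ)..Rs, Real.sqrt (φ r T ^ 2 + ε ^ 2) * r ^ (n-1))
        ≤ gronwallBound (∫ r in (0:ℝ)..Rs, Real.sqrt (φ r 0 ^ 2 + ε ^ 2) * r ^ (n-1))
            lam₂ (ε * ∫ r in (0:ℝ)..Rs, |a r| * r ^ (n-1)) T := by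
    intro ε hε
    have hderiv : ∀ x : ℝ, 0 < x →
        HasDerivAt (fun τ => ∫ r in (0:ℝ)..Rs, Real.sqrt (φ r τ ^ 2 + ε ^ 2) * r ^ (n-1))
          (∫ r in (0:ℝ)..Rs, (φ r x * φt r x / Real.sqrt (φ r x ^ 2 + ε ^ 2)) * r ^ (n-1)) x :=
      fun x hx => deriv_Feps n Rs hRs φ φt hφcont hφtcont hφt ε hε x hx
    have step1 : ∀ t₀ ∈ Ioc (0:ℝ) T,
        (∫ r in (0:ℝ)..Rs, Real.sqrt (φ r T ^ 2 + ε ^ 2) * r ^ (n-1))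
          ≤ gronwallBound (∫ r in (0:ℝ)..Rs, Real.sqrt (φ r t₀ ^ 2 + ε ^ 2) * r ^ (n-1))
              lam₂ (ε * ∫ r in (0:ℝ)..Rs, |a r| * r ^ (n-1)) (T - t₀) := by
      intro t₀ ht₀
      have := le_gronwallBound_of_liminf_deriv_right_le
        (f := fun τ => ∫ r in (0:ℝ)..Rs, Real.sqrt (φ r τ ^ 2 + ε ^ 2) * r ^ (n-1))
        (f' := fun x => ∫ r in (0:ℝ)..Rs,
          (φ r x * φt r x / Real.sqrt (φ r x ^ 2 + ε ^ 2)) * r ^ (n-1))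
        (a := t₀) (b := T)
        (fun x hx => ((hderiv x (lt_of_lt_of_le ht₀.1 hx.1)).continuousAt).continuousWithinAt)
        (fun x hx r hr => freq_slope (hderiv x (lt_of_lt_of_le ht₀.1 hx.1)) hr)
        le_rfl
        (fun x hx => bound_Deps n hn Rs hRs vs vs' hvs hvs'cont hvs0 hvsRs gstar hgstar
          a hacont lam₂ hlam₂ φ φr φt hφcont hφrcont hφtcont hφr heq ε hε x
          (lt_of_lt_of_le ht₀.1 hx.1))
      exact this T ⟨ht₀.2, le_refl T⟩
    have hcw := cont_Feps n Rs hRs φ hφcont ε hε 0 (le_refl (0:ℝ))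
    have h1 : Filter.Tendsto (fun τ => ∫ r in (0:ℝ)..Rs, Real.sqrt (φ r τ ^ 2 + ε ^ 2) * r ^ (n-1))
        (nhdsWithin 0 (Ioi 0))
        (nhds (∫ r in (0:ℝ)..Rs, Real.sqrt (φ r 0 ^ 2 + ε ^ 2) * r ^ (n-1))) :=
      hcw.tendsto.mono_left (nhdsWithin_mono 0 Ioi_subset_Ici_self)
    have h2 : Filter.Tendsto (fun t₀ : ℝ => T - t₀) (nhdsWithin 0 (Ioi 0)) (nhds T) := by
      have : Filter.Tendsto (fun t₀ : ℝ => T - t₀) (nhds 0) (nhds (T - 0)) :=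
        (continuous_const.sub continuous_id).tendsto 0
      simpa using this.mono_left nhdsWithin_le_nhds
    have htend := ((continuous_gronwallBound_delta_x lam₂
        (ε * ∫ r in (0:ℝ)..Rs, |a r| * r ^ (n-1))).tendsto
        ((∫ r in (0:ℝ)..Rs, Real.sqrt (φ r 0 ^ 2 + ε ^ 2) * r ^ (n-1)), T)).comp
        (h1.prodMk_nhds h2)
    refine ge_of_tendsto htend ?_
    filter_upwards [Ioo_mem_nhdsGT_of_mem ⟨le_refl (0:ℝ), h0⟩] with t₀ ht₀
    exact step1 t₀ ⟨ht₀.1, ht₀.2.le⟩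
  -- main estimate for each ε > 0
  have main : ∀ ε : ℝ, 0 < ε →
      (∫ r in (0:ℝ)..Rs, |φ r T| * r ^ (n-1)) ≤
        gronwallBound ((∫ r in (0:ℝ)..Rs, |φ r 0| * r ^ (n-1))
            + ε * ∫ r in (0:ℝ)..Rs, r ^ (n-1))
          lam₂ (ε * ∫ r in (0:ℝ)..Rs, |a r| * r ^ (n-1)) T := by
    intro ε hε
    have iT1 : IntervalIntegrable (fun r => |φ r T| * r ^ (n-1))
        MeasureTheory.volume 0 Rs := intgr _ (by fun_prop)
    have iT2 : IntervalIntegrable (fun r => Real.sqrt (φ r T ^ 2 + ε ^ 2) * r ^ (n-1))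
        MeasureTheory.volume 0 Rs := intgr _ (by fun_prop)
    have h1 : (∫ r in (0:ℝ)..Rs, |φ r T| * r ^ (n-1)) ≤
        ∫ r in (0:ℝ)..Rs, Real.sqrt (φ r T ^ 2 + ε ^ 2) * r ^ (n-1) := by
      apply intervalIntegral.integral_mono_on hRs.le iT1 iT2
      intro r hr
      exact mul_le_mul_of_nonneg_right (abs_le_sqrt_sq_add_sq _ _) (pow_nonneg hr.1 _)
    have h3 : (∫ r in (0:ℝ)..Rs, Real.sqrt (φ r 0 ^ 2 + ε ^ 2) * r ^ (n-1)) ≤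
        (∫ r in (0:ℝ)..Rs, |φ r 0| * r ^ (n-1)) + ε * ∫ r in (0:ℝ)..Rs, r ^ (n-1) := by
      have i01 : IntervalIntegrable (fun r => Real.sqrt (φ r 0 ^ 2 + ε ^ 2) * r ^ (n-1))
          MeasureTheory.volume 0 Rs := intgr _ (by fun_prop)
      have i02 : IntervalIntegrable (fun r : ℝ => |φ r 0| * r ^ (n-1))
          MeasureTheory.volume 0 Rs := intgr _ (by fun_prop)
      have i03 : IntervalIntegrable (fun r : ℝ => ε * r ^ (n-1))
          MeasureTheory.volume 0 Rs := intgr _ (by fun_prop)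
      have hle : (∫ r in (0:ℝ)..Rs, Real.sqrt (φ r 0 ^ 2 + ε ^ 2) * r ^ (n-1)) ≤
          ∫ r in (0:ℝ)..Rs, (|φ r 0| * r ^ (n-1) + ε * r ^ (n-1)) := by
        apply intervalIntegral.integral_mono_on hRs.le i01 (i02.add i03)
        intro r hr
        have h4 := sqrt_sq_add_sq_le (φ r 0) hε.le
        have h5 : (0:ℝ) ≤ r ^ (n-1) := pow_nonneg hr.1 _
        nlinarith
      rwa [intervalIntegral.integral_add i02 i03,
        intervalIntegral.integral_const_mul] at hle
    exact h1.trans ((key_eps ε hε).trans (gronwallBound_mono_delta h3))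
  -- limit ε → 0⁺
  have htend : Filter.Tendsto
      (fun ε => gronwallBound ((∫ r in (0:ℝ)..Rs, |φ r 0| * r ^ (n-1))
          + ε * ∫ r in (0:ℝ)..Rs, r ^ (n-1))
        lam₂ (ε * ∫ r in (0:ℝ)..Rs, |a r| * r ^ (n-1)) T)
      (nhdsWithin 0 (Ioi 0))
      (nhds (gronwallBound (∫ r in (0:ℝ)..Rs, |φ r 0| * r ^ (n-1)) lam₂ 0 T)) := by
    have hc : Continuous (fun ε : ℝ =>
        gronwallBound ((∫ r in (0:ℝ)..Rs, |φ r 0| * r ^ (n-1))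
            + ε * ∫ r in (0:ℝ)..Rs, r ^ (n-1))
          lam₂ (ε * ∫ r in (0:ℝ)..Rs, |a r| * r ^ (n-1)) T) := by
      have hp : Continuous (fun ε : ℝ =>
          (((∫ r in (0:ℝ)..Rs, |φ r 0| * r ^ (n-1))
              + ε * ∫ r in (0:ℝ)..Rs, r ^ (n-1),
            ε * ∫ r in (0:ℝ)..Rs, |a r| * r ^ (n-1)) : ℝ × ℝ)) := by fun_prop
      have := (continuous_gronwallBound_delta_eps lam₂ T).comp hp
      exact this
    have := (hc.tendsto 0).mono_left (nhdsWithin_le_nhds (s := Ioi (0:ℝ)))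
    simpa using this
  have hfin := ge_of_tendsto htend
    (Filter.eventually_of_mem self_mem_nhdsWithin (fun ε hε => main ε hε))
  rwa [gronwallBound_ε0, mul_comm] at hfin
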